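/- Let d ≥ 1 and let j : (0,∞) → [0,∞) be nonincreasing with ∫_{ℝ^d} min{1,|x|²} j(|x|) dx < ∞. Suppose there exist c₀, δ₀ > 0 with j(r) ≥ c₀·r^{−d} for all r ∈ (0, δ₀], and there exist C > 0, R ∈ (0, 1/e), α > 0 such that r^{d+2}·j(r) ≤ C·(log(1/s)/log(1/r))^{1+α}·s^{d+2}·j(s) for all 0 < s ≤ r ≤ R. Then there exist C' > 0 and δ > 0 such that λ(r) ≤ C'·r^d·j(r) for all r ∈ (0, δ]. -/

import Mathlib

open MeasureTheory Metric ENNReal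

/-- Tail `λ(r) = ∫_{ℝ^d ∖ B(0,r)} j(|x|) dx` in `ℝ^d`. -/
noncomputable def tailLam (d : ℕ) (j : ℝ → ℝ) (r : ℝ) : ℝ≥0∞ :=
  ∫⁻ x in (Metric.ball (0 : EuclideanSpace ℝ (Fin d)) r)ᶜ,
    ENNReal.ofReal (j ‖x‖)

lemma star_bound (α R : ℝ) (hα : 0 < α) (hR1 : R < (Real.exp 1)⁻¹)
    (r : ℝ) (hr : 0 < r) (k : ℕ) (hkR : 2 ^ k * r ≤ R) :
    (Real.log (1 / r) / Real.log (1 / (2 ^ k * r))) ^ (1 + α) *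
        (((2 : ℝ) ^ k)⁻¹ * ((2 : ℝ) ^ k)⁻¹)
      ≤ ((2 : ℝ) ^ (1 + α) + (2 * (1 + α)) ^ (1 + α)) * ((2 : ℝ) ^ k)⁻¹ := by
  have hρ : (0 : ℝ) < 2 ^ k * r := by positivity
  have h2k1 : (1 : ℝ) ≤ 2 ^ k := one_le_pow₀ (by norm_num)
  have h2kpos : (0 : ℝ) < 2 ^ k := by positivity
  have hexp : Real.exp 1 < 1 / (2 ^ k * r) := by
    rw [one_div]
    have h1 : 2 ^ k * r < (Real.exp 1)⁻¹ := lt_of_le_of_lt hkR hR1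
    have := (inv_lt_inv₀ (by positivity) hρ).mpr h1
    simpa using this
  set L : ℝ := Real.log (1 / r) with hL
  set Lk : ℝ := Real.log (1 / (2 ^ k * r)) with hLk
  have hLk1 : 1 < Lk := by
    have := Real.log_lt_log (Real.exp_pos 1) hexp
    rwa [Real.log_exp] at this
  have hLkL : Lk ≤ L := by
    apply Real.log_le_log (by positivity)
    rw [div_le_div_iff₀ (by positivity) hr]
    nlinarith
  have hL1 : 1 < L := lt_of_lt_of_le hLk1 hLkL
  have hLkeq : Lk = L - k * Real.log 2 := by
    rw [hLk, hL, one_div, one_div, Real.log_inv, Real.log_inv,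
      Real.log_mul (by positivity) (ne_of_gt hr), Real.log_pow]
    ring
  have hQ0 : 0 ≤ L / Lk := by positivity
  have h1α : (0 : ℝ) ≤ 1 + α := by linarith
  by_cases hcase : (k : ℝ) * Real.log 2 ≤ L / 2
  · -- easy regime: Lk ≥ L/2
    have hQ2 : L / Lk ≤ 2 := by
      rw [div_le_iff₀ (by linarith)]
      rw [hLkeq]; linarith
    have h1 : (L / Lk) ^ (1 + α) ≤ (2 : ℝ) ^ (1 + α) :=
      Real.rpow_le_rpow hQ0 hQ2 h1α
    have h2 : ((2 : ℝ) ^ k)⁻¹ ≤ 1 := by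
      rw [inv_le_one_iff₀]; right; exact h2k1
    calc (L / Lk) ^ (1 + α) * (((2:ℝ) ^ k)⁻¹ * ((2:ℝ) ^ k)⁻¹)
        ≤ (2 : ℝ) ^ (1 + α) * (1 * ((2:ℝ) ^ k)⁻¹) := by
          apply mul_le_mul h1 (by gcongr) (by positivity) (by positivity)
      _ ≤ ((2 : ℝ) ^ (1 + α) + (2 * (1 + α)) ^ (1 + α)) * ((2:ℝ) ^ k)⁻¹ := by
          rw [one_mul]
          have : (0:ℝ) < (2 * (1 + α)) ^ (1 + α) := Real.rpow_pos_of_pos (by linarith) _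
          have h3 : (0:ℝ) < ((2:ℝ) ^ k)⁻¹ := by positivity
          nlinarith
  · -- hard regime: k log 2 > L/2
    push_neg at hcase
    have hQL : L / Lk ≤ L := div_le_self (by linarith) hLk1.le
    have h1 : (L / Lk) ^ (1 + α) ≤ L ^ (1 + α) := Real.rpow_le_rpow hQ0 hQL h1α
    set ε : ℝ := (2 * (1 + α))⁻¹ with hε
    have hεpos : 0 < ε := by positivity
    have hlog : L ≤ (1 / r) ^ ε / ε := Real.log_le_rpow_div (by positivity) hεpos
    have hLpow : L ^ (1 + α) ≤ (2 * (1 + α)) ^ (1 + α) * (1 / r) ^ ((1:ℝ)/2) := by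
      have h2 : L ^ (1 + α) ≤ ((1 / r) ^ ε / ε) ^ (1 + α) :=
        Real.rpow_le_rpow (by linarith) hlog h1α
      have hne : (1 + α) ≠ 0 := by positivity
      have hεmul : ε * (1 + α) = 1 / 2 := by
        rw [hε]; field_simp
      have h3 : ((1 / r) ^ ε / ε) ^ (1 + α)
          = (2 * (1 + α)) ^ (1 + α) * (1 / r) ^ ((1:ℝ)/2) := by
        rw [div_eq_mul_inv, Real.mul_rpow (by positivity) (by positivity),
          ← Real.rpow_mul (by positivity), hεmul, hε, inv_inv, mul_comm]
      rw [← h3]; exact h2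
    have hrpow : (1 / r) ^ ((1:ℝ)/2) = Real.exp (L / 2) := by
      rw [Real.rpow_def_of_pos (by positivity), hL]
      ring_nf
    have hkey : (1 / r) ^ ((1:ℝ)/2) * ((2:ℝ) ^ k)⁻¹ ≤ 1 := by
      have h2keq : ((2:ℝ)) ^ k = Real.exp ((k : ℝ) * Real.log 2) := by
        rw [Real.exp_nat_mul, Real.exp_log (by norm_num)]
      have hle : Real.exp (L / 2) ≤ (2:ℝ) ^ k := by
        rw [h2keq]; exact Real.exp_le_exp.mpr hcase.le
      have hinv : ((2:ℝ) ^ k)⁻¹ ≤ (Real.exp (L / 2))⁻¹ :=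
        inv_anti₀ (Real.exp_pos _) hle
      calc (1 / r) ^ ((1:ℝ)/2) * ((2:ℝ) ^ k)⁻¹
          ≤ Real.exp (L / 2) * (Real.exp (L / 2))⁻¹ := by
            rw [hrpow]; gcongr
        _ = 1 := mul_inv_cancel₀ (ne_of_gt (Real.exp_pos _))
    have hM2 : (0:ℝ) < (2 * (1 + α)) ^ (1 + α) := Real.rpow_pos_of_pos (by linarith) _
    have h2a : (0:ℝ) < (2:ℝ) ^ (1 + α) := Real.rpow_pos_of_pos (by norm_num) _
    calc (L / Lk) ^ (1 + α) * (((2:ℝ) ^ k)⁻¹ * ((2:ℝ) ^ k)⁻¹)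
        ≤ ((2 * (1 + α)) ^ (1 + α) * (1 / r) ^ ((1:ℝ)/2)) *
            (((2:ℝ) ^ k)⁻¹ * ((2:ℝ) ^ k)⁻¹) := by
          apply mul_le_mul (h1.trans hLpow) le_rfl (by positivity)
          positivity
      _ = (2 * (1 + α)) ^ (1 + α) *
            (((1 / r) ^ ((1:ℝ)/2) * ((2:ℝ) ^ k)⁻¹) * ((2:ℝ) ^ k)⁻¹) := by ring
      _ ≤ (2 * (1 + α)) ^ (1 + α) * (1 * ((2:ℝ) ^ k)⁻¹) := by
          gcongr
      _ ≤ ((2:ℝ) ^ (1 + α) + (2 * (1 + α)) ^ (1 + α)) * ((2:ℝ) ^ k)⁻¹ := by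
          rw [one_mul]
          have h3 : (0:ℝ) < ((2:ℝ) ^ k)⁻¹ := by positivity
          nlinarith

lemma tailLam_step (d : ℕ) (j : ℝ → ℝ) (hmono : AntitoneOn j (Set.Ioi (0:ℝ)))
    (ρ ρ' : ℝ) (hρ : 0 < ρ) :
    tailLam d j ρ ≤
      ENNReal.ofReal (j ρ) * volume (Metric.ball (0 : EuclideanSpace ℝ (Fin d)) ρ')
        + tailLam d j ρ' := by
  have hsub : (Metric.ball (0 : EuclideanSpace ℝ (Fin d)) ρ)ᶜ ⊆
      (Metric.ball (0 : EuclideanSpace ℝ (Fin d)) ρ' \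
        Metric.ball (0 : EuclideanSpace ℝ (Fin d)) ρ) ∪
      (Metric.ball (0 : EuclideanSpace ℝ (Fin d)) ρ')ᶜ := by
    intro x hx
    by_cases hx' : x ∈ Metric.ball (0 : EuclideanSpace ℝ (Fin d)) ρ'
    · exact Or.inl ⟨hx', hx⟩
    · exact Or.inr hx'
  calc tailLam d j ρ
      ≤ ∫⁻ x in (Metric.ball (0 : EuclideanSpace ℝ (Fin d)) ρ' \
          Metric.ball (0 : EuclideanSpace ℝ (Fin d)) ρ) ∪
          (Metric.ball (0 : EuclideanSpace ℝ (Fin d)) ρ')ᶜ,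
          ENNReal.ofReal (j ‖x‖) := lintegral_mono_set hsub
    _ ≤ (∫⁻ x in Metric.ball (0 : EuclideanSpace ℝ (Fin d)) ρ' \
          Metric.ball (0 : EuclideanSpace ℝ (Fin d)) ρ, ENNReal.ofReal (j ‖x‖))
        + tailLam d j ρ' := lintegral_union_le _ _ _
    _ ≤ ENNReal.ofReal (j ρ) * volume (Metric.ball (0 : EuclideanSpace ℝ (Fin d)) ρ')
        + tailLam d j ρ' := by
      gcongr
      calc (∫⁻ x in Metric.ball (0 : EuclideanSpace ℝ (Fin d)) ρ' \
            Metric.ball (0 : EuclideanSpace ℝ (Fin d)) ρ, ENNReal.ofReal (j ‖x‖))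
          ≤ ∫⁻ _x in Metric.ball (0 : EuclideanSpace ℝ (Fin d)) ρ' \
            Metric.ball (0 : EuclideanSpace ℝ (Fin d)) ρ, ENNReal.ofReal (j ρ) := by
            apply setLIntegral_mono' (measurableSet_ball.diff measurableSet_ball)
            intro x hx
            have hge : ρ ≤ ‖x‖ := by
              have := hx.2
              simp only [mem_ball, dist_zero_right, not_lt] at this
              exact this
            exact ENNReal.ofReal_le_ofReal
              (hmono (Set.mem_Ioi.2 hρ) (Set.mem_Ioi.2 (lt_of_lt_of_le hρ hge)) hge)
        _ = ENNReal.ofReal (j ρ) * volume (Metric.ball (0 : EuclideanSpace ℝ (Fin d)) ρ' \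
            Metric.ball (0 : EuclideanSpace ℝ (Fin d)) ρ) := setLIntegral_const _ _
        _ ≤ ENNReal.ofReal (j ρ) *
            volume (Metric.ball (0 : EuclideanSpace ℝ (Fin d)) ρ') := by
            gcongr
            exact Set.diff_subset

lemma tailLam_chain (d : ℕ) (j : ℝ → ℝ) (hmono : AntitoneOn j (Set.Ioi (0:ℝ)))
    (r : ℝ) (hr : 0 < r) (K : ℕ) :
    tailLam d j r ≤
      (∑ k ∈ Finset.range K, ENNReal.ofReal (j (2 ^ k * r)) *
        volume (Metric.ball (0 : EuclideanSpace ℝ (Fin d)) (2 ^ (k+1) * r)))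
      + tailLam d j (2 ^ K * r) := by
  induction K with
  | zero => simp
  | succ K ih =>
    refine ih.trans ?_
    rw [Finset.sum_range_succ, add_assoc]
    gcongr
    have := tailLam_step d j hmono (2 ^ K * r) (2 ^ (K+1) * r) (by positivity)
    convert this using 3 <;> ring

theorem stmt4 (d : ℕ) (hd : 1 ≤ d) (j : ℝ → ℝ)
    (hnonneg : ∀ r : ℝ, 0 < r → 0 ≤ j r)
    (hmono : AntitoneOn j (Set.Ioi (0 : ℝ)))
    (hLK : (∫⁻ x : EuclideanSpace ℝ (Fin d),
      ENNReal.ofReal (min 1 (‖x‖ ^ 2) * j ‖x‖)) < ⊤)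
    (c₀ δ₀ : ℝ) (hc₀ : 0 < c₀) (hδ₀ : 0 < δ₀)
    (hlow : ∀ r : ℝ, 0 < r → r ≤ δ₀ → c₀ * r ^ (-(d : ℝ)) ≤ j r)
    (C R α : ℝ) (hC : 0 < C) (hR0 : 0 < R) (hR1 : R < (Real.exp 1)⁻¹) (hα : 0 < α)
    (hscale : ∀ s r : ℝ, 0 < s → s ≤ r → r ≤ R →
      r ^ (d + 2) * j r ≤
        C * (Real.log (1 / s) / Real.log (1 / r)) ^ (1 + α) * (s ^ (d + 2) * j s)) :
    ∃ C' δ : ℝ, 0 < C' ∧ 0 < δ ∧ ∀ r : ℝ, 0 < r → r ≤ δ →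
      tailLam d j r ≤ ENNReal.ofReal (C' * (r ^ d * j r)) := by
  classical
  haveI : Nontrivial (EuclideanSpace ℝ (Fin d)) := by
    refine ⟨EuclideanSpace.single ⟨0, hd⟩ (1:ℝ), 0, fun h => ?_⟩
    have := congrArg (fun v : EuclideanSpace ℝ (Fin d) => v ⟨0, hd⟩) h
    simp [EuclideanSpace.single_apply] at this
  -- constants
  set M₁ : ℝ := (2 : ℝ) ^ (1 + α) + (2 * (1 + α)) ^ (1 + α) with hM₁
  have hM₁pos : 0 < M₁ := by
    have h1 : (0:ℝ) < (2:ℝ) ^ (1 + α) := Real.rpow_pos_of_pos (by norm_num) _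
    have h2 : (0:ℝ) < (2 * (1 + α)) ^ (1 + α) := Real.rpow_pos_of_pos (by linarith) _
    rw [hM₁]; linarith
  set B : ℝ≥0∞ := volume (Metric.ball (0 : EuclideanSpace ℝ (Fin d)) 1) with hB
  have hBtop : B ≠ ⊤ := measure_ball_lt_top.ne
  have hBpos : 0 < B := measure_ball_pos volume 0 one_pos
  set b : ℝ := B.toReal with hb
  have hbpos : 0 < b := ENNReal.toReal_pos hBpos.ne' hBtop
  set m : ℝ := min 1 (R ^ 2) with hm
  have hmpos : 0 < m := lt_min one_pos (by positivity)
  set T : ℝ≥0∞ := (ENNReal.ofReal m)⁻¹ *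
    (∫⁻ x : EuclideanSpace ℝ (Fin d), ENNReal.ofReal (min 1 (‖x‖ ^ 2) * j ‖x‖)) with hT
  have hTtop : T ≠ ⊤ := by
    apply ENNReal.mul_ne_top
    · exact ENNReal.inv_ne_top.mpr (ENNReal.ofReal_pos.mpr hmpos).ne'
    · exact hLK.ne
  set t : ℝ := T.toReal with ht
  have ht0 : 0 ≤ t := ENNReal.toReal_nonneg
  set A : ℝ := 2 * ((2:ℝ) ^ d * C * M₁ * b) with hA
  have hApos : 0 < A := by positivity
  refine ⟨A + t / c₀, min δ₀ R, by positivity, lt_min hδ₀ hR0, ?_⟩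
  intro r hr hrδ
  have hrδ₀ : r ≤ δ₀ := le_trans hrδ (min_le_left _ _)
  have hrR : r ≤ R := le_trans hrδ (min_le_right _ _)
  have hjr : 0 ≤ j r := hnonneg r hr
  have hP : 0 ≤ r ^ d * j r := by positivity
  -- lower bound: c₀ ≤ r^d * j r
  have hlow' : c₀ ≤ r ^ d * j r := by
    have h1 := hlow r hr hrδ₀
    have h2 : r ^ (-(d : ℝ)) = ((r : ℝ) ^ d)⁻¹ := by
      rw [Real.rpow_neg hr.le, Real.rpow_natCast]
    rw [h2] at h1
    have h3 : r ^ d * (c₀ * (r ^ d)⁻¹) = c₀ := by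
      field_simp
    calc c₀ = r ^ d * (c₀ * (r ^ d)⁻¹) := h3.symm
      _ ≤ r ^ d * j r := by
          apply mul_le_mul_of_nonneg_left h1 (by positivity)
  -- choose K minimal with R < 2^K * r
  have hex : ∃ n : ℕ, R < 2 ^ n * r := by
    obtain ⟨n, hn⟩ := pow_unbounded_of_one_lt (R / r) (by norm_num : (1:ℝ) < 2)
    exact ⟨n, by rwa [div_lt_iff₀ hr] at hn⟩
  set K : ℕ := Nat.find hex with hK
  have hK1 : R < 2 ^ K * r := Nat.find_spec hex
  have hKmin : ∀ k, k < K → 2 ^ k * r ≤ R := fun k hk =>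
    not_lt.mp (Nat.find_min hex hk)
  -- per-annulus real bound
  have hann : ∀ k, k < K →
      j (2 ^ k * r) * (2 ^ (k+1) * r) ^ d ≤
        ((2:ℝ) ^ d * C * M₁ * (r ^ d * j r)) * ((2:ℝ) ^ k)⁻¹ := by
    intro k hk
    have hkR : 2 ^ k * r ≤ R := hKmin k hk
    have hρ : (0:ℝ) < 2 ^ k * r := by positivity
    have h2k1 : (1:ℝ) ≤ 2 ^ k := one_le_pow₀ (by norm_num)
    have hs := hscale r (2 ^ k * r) hr
      (le_mul_of_one_le_left hr.le h2k1) hkR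
    set Qp : ℝ := (Real.log (1 / r) / Real.log (1 / (2 ^ k * r))) ^ (1 + α) with hQp
    -- divide hscale by (2^k r)^2
    have hstep : j (2 ^ k * r) * (2 ^ k * r) ^ d ≤
        C * Qp * (r ^ d * j r) * (((2:ℝ) ^ k)⁻¹ * ((2:ℝ) ^ k)⁻¹) := by
      have hpos : (0:ℝ) < ((2:ℝ) ^ k) ^ 2 * r ^ 2 := by positivity
      apply le_of_mul_le_mul_right _ hpos
      have e1 : j (2 ^ k * r) * (2 ^ k * r) ^ d * (((2:ℝ) ^ k) ^ 2 * r ^ 2)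
          = (2 ^ k * r) ^ (d + 2) * j (2 ^ k * r) := by
        rw [pow_add, mul_pow]; ring
      have e2 : C * Qp * (r ^ d * j r) * (((2:ℝ) ^ k)⁻¹ * ((2:ℝ) ^ k)⁻¹) *
          (((2:ℝ) ^ k) ^ 2 * r ^ 2) = C * Qp * (r ^ (d + 2) * j r) := by
        have h2ne : ((2:ℝ) ^ k) ≠ 0 := by positivity
        rw [pow_add]; field_simp
      rw [e1, e2]; exact hs
    have hstar := star_bound α R hα hR1 r hr k hkR
    rw [← hQp, ← hM₁] at hstar
    have h4 : C * Qp * (r ^ d * j r) * (((2:ℝ) ^ k)⁻¹ * ((2:ℝ) ^ k)⁻¹) ≤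
        C * (r ^ d * j r) * (M₁ * ((2:ℝ) ^ k)⁻¹) := by
      have := mul_le_mul_of_nonneg_left hstar (by positivity : (0:ℝ) ≤ C * (r ^ d * j r))
      calc C * Qp * (r ^ d * j r) * (((2:ℝ) ^ k)⁻¹ * ((2:ℝ) ^ k)⁻¹)
          = C * (r ^ d * j r) * (Qp * (((2:ℝ) ^ k)⁻¹ * ((2:ℝ) ^ k)⁻¹)) := by ring
        _ ≤ C * (r ^ d * j r) * (M₁ * ((2:ℝ) ^ k)⁻¹) := this
    have e3 : (2 ^ (k+1) * r) ^ d = (2:ℝ) ^ d * (2 ^ k * r) ^ d := by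
      rw [pow_succ]
      rw [show (2:ℝ) ^ k * 2 * r = 2 * (2 ^ k * r) by ring, mul_pow]
    calc j (2 ^ k * r) * (2 ^ (k+1) * r) ^ d
        = (2:ℝ) ^ d * (j (2 ^ k * r) * (2 ^ k * r) ^ d) := by rw [e3]; ring
      _ ≤ (2:ℝ) ^ d * (C * (r ^ d * j r) * (M₁ * ((2:ℝ) ^ k)⁻¹)) := by
          apply mul_le_mul_of_nonneg_left (hstep.trans h4) (by positivity)
      _ = ((2:ℝ) ^ d * C * M₁ * (r ^ d * j r)) * ((2:ℝ) ^ k)⁻¹ := by ring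
  -- the dyadic sum, in ℝ≥0∞
  have hsum : (∑ k ∈ Finset.range K, ENNReal.ofReal (j (2 ^ k * r)) *
      volume (Metric.ball (0 : EuclideanSpace ℝ (Fin d)) (2 ^ (k+1) * r)))
      ≤ ENNReal.ofReal (A * (r ^ d * j r)) := by
    set c : ℝ := (2:ℝ) ^ d * C * M₁ * (r ^ d * j r) with hc
    have hc0 : 0 ≤ c := by positivity
    have hterm : ∀ k ∈ Finset.range K,
        ENNReal.ofReal (j (2 ^ k * r)) *
          volume (Metric.ball (0 : EuclideanSpace ℝ (Fin d)) (2 ^ (k+1) * r))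
        ≤ ENNReal.ofReal (c * (1/2:ℝ) ^ k * b) := by
      intro k hkmem
      have hk : k < K := Finset.mem_range.mp hkmem
      have hρ' : (0:ℝ) ≤ 2 ^ (k+1) * r := by positivity
      have hjk : 0 ≤ j (2 ^ k * r) := hnonneg _ (by positivity)
      rw [Measure.addHaar_ball volume 0 hρ', finrank_euclideanSpace_fin, ← hB]
      calc ENNReal.ofReal (j (2 ^ k * r)) *
            (ENNReal.ofReal ((2 ^ (k+1) * r) ^ d) * B)
          = ENNReal.ofReal (j (2 ^ k * r) * (2 ^ (k+1) * r) ^ d) * B := by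
            rw [ENNReal.ofReal_mul hjk, mul_assoc]
        _ ≤ ENNReal.ofReal (c * (1/2:ℝ) ^ k) * B := by
            apply mul_le_mul_left
            apply ENNReal.ofReal_le_ofReal
            calc j (2 ^ k * r) * (2 ^ (k+1) * r) ^ d
                ≤ ((2:ℝ) ^ d * C * M₁ * (r ^ d * j r)) * ((2:ℝ) ^ k)⁻¹ := hann k hk
              _ = c * (1/2:ℝ) ^ k := by rw [hc, one_div, inv_pow]
        _ = ENNReal.ofReal (c * (1/2:ℝ) ^ k) * ENNReal.ofReal b := by
            rw [hb, ENNReal.ofReal_toReal hBtop]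
        _ = ENNReal.ofReal (c * (1/2:ℝ) ^ k * b) := by
            rw [← ENNReal.ofReal_mul (by positivity)]
    calc (∑ k ∈ Finset.range K, ENNReal.ofReal (j (2 ^ k * r)) *
          volume (Metric.ball (0 : EuclideanSpace ℝ (Fin d)) (2 ^ (k+1) * r)))
        ≤ ∑ k ∈ Finset.range K, ENNReal.ofReal (c * (1/2:ℝ) ^ k * b) :=
          Finset.sum_le_sum hterm
      _ = ENNReal.ofReal (∑ k ∈ Finset.range K, c * (1/2:ℝ) ^ k * b) :=
          (ENNReal.ofReal_sum_of_nonneg (fun i _ => by positivity)).symm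
      _ ≤ ENNReal.ofReal (A * (r ^ d * j r)) := by
          apply ENNReal.ofReal_le_ofReal
          have hgeom := sum_geometric_two_le K
          calc (∑ k ∈ Finset.range K, c * (1/2:ℝ) ^ k * b)
              = (c * b) * ∑ k ∈ Finset.range K, (1/(2:ℝ)) ^ k := by
                rw [Finset.mul_sum]; apply Finset.sum_congr rfl; intros; ring
            _ ≤ (c * b) * 2 := by
                apply mul_le_mul_of_nonneg_left hgeom (by positivity)
            _ = A * (r ^ d * j r) := by rw [hc, hA]; ring
  -- the tail beyond R
  have htail : tailLam d j (2 ^ K * r) ≤ ENNReal.ofReal ((t / c₀) * (r ^ d * j r)) := by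
    have h1 : tailLam d j (2 ^ K * r) ≤ tailLam d j R :=
      lintegral_mono_set (Set.compl_subset_compl.mpr (ball_subset_ball hK1.le))
    have h2 : tailLam d j R ≤ T := by
      rw [hT]
      calc tailLam d j R
          ≤ ∫⁻ x in (Metric.ball (0 : EuclideanSpace ℝ (Fin d)) R)ᶜ,
              (ENNReal.ofReal m)⁻¹ * ENNReal.ofReal (min 1 (‖x‖ ^ 2) * j ‖x‖) := by
            apply setLIntegral_mono' measurableSet_ball.compl
            intro x hx
            have hxR : R ≤ ‖x‖ := by
              have : ¬ (dist x 0 < R) := hx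
              rw [dist_zero_right, not_lt] at this
              exact this
            have hx0 : 0 < ‖x‖ := lt_of_lt_of_le hR0 hxR
            have hjx : 0 ≤ j ‖x‖ := hnonneg _ hx0
            have hmle : m ≤ min 1 (‖x‖ ^ 2) := by
              apply le_min (min_le_left _ _)
              exact le_trans (min_le_right _ _) (by nlinarith)
            have hmul : ENNReal.ofReal m * ENNReal.ofReal (j ‖x‖) ≤
                ENNReal.ofReal (min 1 (‖x‖ ^ 2) * j ‖x‖) := by
              rw [← ENNReal.ofReal_mul hmpos.le]
              exact ENNReal.ofReal_le_ofReal (mul_le_mul_of_nonneg_right hmle hjx)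
            calc ENNReal.ofReal (j ‖x‖)
                = (ENNReal.ofReal m)⁻¹ * (ENNReal.ofReal m * ENNReal.ofReal (j ‖x‖)) := by
                  rw [← mul_assoc, ENNReal.inv_mul_cancel
                    (ENNReal.ofReal_pos.mpr hmpos).ne' ENNReal.ofReal_ne_top, one_mul]
              _ ≤ _ := mul_le_mul_right hmul _
        _ = (ENNReal.ofReal m)⁻¹ *
            ∫⁻ x in (Metric.ball (0 : EuclideanSpace ℝ (Fin d)) R)ᶜ,
              ENNReal.ofReal (min 1 (‖x‖ ^ 2) * j ‖x‖) :=
            lintegral_const_mul' _ _ (ENNReal.inv_ne_top.mpr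
              (ENNReal.ofReal_pos.mpr hmpos).ne')
        _ ≤ (ENNReal.ofReal m)⁻¹ *
            ∫⁻ x : EuclideanSpace ℝ (Fin d),
              ENNReal.ofReal (min 1 (‖x‖ ^ 2) * j ‖x‖) :=
            mul_le_mul_right (setLIntegral_le_lintegral _ _) _
    have h3 : T = ENNReal.ofReal t := (ENNReal.ofReal_toReal hTtop).symm
    have h4 : t ≤ (t / c₀) * (r ^ d * j r) := by
      calc t = (t / c₀) * c₀ := (div_mul_cancel₀ t hc₀.ne').symm
        _ ≤ (t / c₀) * (r ^ d * j r) :=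
            mul_le_mul_of_nonneg_left hlow' (by positivity)
    exact (h1.trans h2).trans (h3 ▸ ENNReal.ofReal_le_ofReal h4)
  -- combine
  calc tailLam d j r
      ≤ (∑ k ∈ Finset.range K, ENNReal.ofReal (j (2 ^ k * r)) *
          volume (Metric.ball (0 : EuclideanSpace ℝ (Fin d)) (2 ^ (k+1) * r)))
        + tailLam d j (2 ^ K * r) := tailLam_chain d j hmono r hr K
    _ ≤ ENNReal.ofReal (A * (r ^ d * j r)) +
        ENNReal.ofReal ((t / c₀) * (r ^ d * j r)) := add_le_add hsum htail
    _ = ENNReal.ofReal ((A + t / c₀) * (r ^ d * j r)) := by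
        rw [← ENNReal.ofReal_add (by positivity) (by positivity)]
        ring_nf
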